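/- Let G = (V,E) be a finite simple strongly connected directed graph. The edge set of the tree graph 𝒯G can be partitioned into edge-disjoint simple directed cycles, each of which projects bijectively under p onto a simple directed cycle of G. Moreover, for every simple directed cycle C of G with vertex set W, the number of simple cycles of 𝒯G lying above C equals the number of oriented forests of G rooted in W. -/

import Mathlib

open Classical Finset

noncomputable section

variable {V : Type*} {R : Type*} [CommRing R]

/-- An oriented spanning tree of the digraph `E` on `V`: `root` has outdegree 0
(convention `out root = root`), every other vertex `v` has a unique outgoing edge
`(v, out v)` which is an edge of the graph, and iterating `out` from any vertex
reaches the root (no cycles). -/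
structure SpTree [Fintype V] (E : V → V → Prop) where
  root : V
  out : V → V
  out_root : out root = root
  edge_mem : ∀ v, v ≠ root → E v (out v)
  reach : ∀ v, ∃ n, out^[n] v = root

theorem SpTree.ext' [Fintype V] {E : V → V → Prop} {a b : SpTree E}
    (h1 : a.root = b.root) (h2 : a.out = b.out) : a = b := by
  cases a; cases b; dsimp at h1 h2; subst h1; subst h2; rfl

noncomputable instance [Fintype V] (E : V → V → Prop) : Fintype (SpTree E) :=
  Fintype.ofInjective (fun a => (a.root, a.out)) fun a b h =>
    SpTree.ext' (congrArg Prod.fst h) (congrArg Prod.snd h)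

/-- An oriented forest of the digraph `E`, rooted in the set `U`. -/
structure SpForest [Fintype V] (E : V → V → Prop) (U : Finset V) where
  out : V → V
  out_root : ∀ v ∈ U, out v = v
  edge_mem : ∀ v, v ∉ U → E v (out v)
  reach : ∀ v, ∃ n, out^[n] v ∈ U

theorem SpForest.ext' [Fintype V] {E : V → V → Prop} {U : Finset V} {a b : SpForest E U}
    (h : a.out = b.out) : a = b := by
  cases a; cases b; dsimp at h; subst h; rfl

noncomputable instance [Fintype V] (E : V → V → Prop) (U : Finset V) :
    Fintype (SpForest E U) :=
  Fintype.ofInjective SpForest.out fun _ _ h => SpForest.ext' h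

/-- The adjacency relation of the tree graph `𝒯G`: there is an edge from `a` to `b`
if `b` is obtained from `a` by adding the edge `(a.root, b.root)` of `G` and deleting
the edge of `a` going out of `b.root`. -/
def TStep [Fintype V] (E : V → V → Prop) (a b : SpTree E) : Prop :=
  E a.root b.root ∧ a.root ≠ b.root ∧ b.out a.root = b.root ∧
    ∀ v, v ≠ a.root → v ≠ b.root → b.out v = a.out v

/-- The set `W` is strongly connected in the digraph `E` (for the induced subgraph). -/
def SConn (E : V → V → Prop) (W : Set V) : Prop :=
  ∀ u ∈ W, ∀ v ∈ W, Relation.ReflTransGen (fun a b => E a b ∧ a ∈ W ∧ b ∈ W) u v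

/-- Edge-weighted Laplacian matrix of the digraph `E`, with weight `x (v,w)` on the
edge from `v` to `w`. -/
def lapM [Fintype V] (E : V → V → Prop) (x : V × V → R) : Matrix V V R :=
  Matrix.of fun v w =>
    if v = w then -(∑ u ∈ univ.filter (fun u => E v u), x (v, u))
    else if E v w then x (v, w) else 0

/-- Schrödinger operator `L = Q + Y` with potential `y`. -/
def schrM [Fintype V] (E : V → V → Prop) (x : V × V → R) (y : V → R) : Matrix V V R :=
  lapM E x + Matrix.diagonal y

/-- Weighted adjacency matrix. -/
def adjM [Fintype V] (E : V → V → Prop) (x : V × V → R) : Matrix V V R :=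
  Matrix.of fun v w => if E v w then x (v, w) else 0

/-- Submatrix keeping rows and columns indexed by `W`. -/
def subM [Fintype V] (M : Matrix V V R) (W : Finset V) :
    Matrix {v // v ∈ W} {v // v ∈ W} R :=
  M.submatrix Subtype.val Subtype.val

/-- The lifted edge weights on the tree graph: the edge from `a` to `b` in `𝒯G`
carries the weight of the edge of `G` from `a.root` to `b.root`. -/
def xT [Fintype V] (E : V → V → Prop) (x : V × V → R) : SpTree E × SpTree E → R :=
  fun p => x (p.1.root, p.2.root)

/-- The lifted potential on the tree graph. -/
def yT [Fintype V] (E : V → V → Prop) (y : V → R) : SpTree E → R :=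
  fun a => y a.root

/-- Weight `π_𝐚` of a spanning tree: product of its edge weights. -/
def treeWt [Fintype V] {E : V → V → Prop} (x : V × V → R) (a : SpTree E) : R :=
  ∏ v ∈ univ.filter (fun v => v ≠ a.root), x (v, a.out v)

/-- Generating polynomial of the oriented spanning trees of `E`. -/
def FGpoly [Fintype V] (E : V → V → Prop) (x : V × V → R) : R :=
  ∑ a : SpTree E, treeWt x a

/-- Weight `π_𝐟` of a forest: product of its edge weights. -/
def forestWt [Fintype V] {E : V → V → Prop} {U : Finset V} (x : V × V → R)
    (f : SpForest E U) : R :=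
  ∏ v ∈ univ.filter (fun v => v ∉ U), x (v, f.out v)

/-- Generating polynomial `Ψ_U` of the oriented forests of `E` rooted in `U`. -/
def PsiF [Fintype V] (E : V → V → Prop) (U : Finset V) (x : V × V → R) : R :=
  ∑ f : SpForest E U, forestWt x f

/-- Generating polynomial of the oriented spanning trees of the tree graph `𝒯G`. -/
def FTGpoly [Fintype V] (E : V → V → Prop) (x : V × V → R) : R :=
  FGpoly (TStep E) (xT E x)

/-- The polynomial ring `ℂ[x_e (e ∈ V × V), y_v (v ∈ V)]`. -/
abbrev Rng (V : Type*) := MvPolynomial ((V × V) ⊕ V) ℂ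

/-- The edge variable `x_e`. -/
def xv {V : Type*} : V × V → Rng V := fun e => MvPolynomial.X (Sum.inl e)

/-- The vertex variable `y_v`. -/
def yv {V : Type*} : V → Rng V := fun v => MvPolynomial.X (Sum.inr v)

/-! ### The exploration algorithm -/

/-- The state of the exploration algorithm: a set `A` of explored vertices, a FIFO
list `Lq` of edges to be examined, a reservoir `F` of edges, and the set `Er` of
erased vertices. -/
structure ExpState (V : Type*) where
  A : Finset V
  Lq : List (V × V)
  F : Finset (V × V)
  Er : Finset V

/-- The list of the edges of `S` with target `w`, ordered by increasing source. -/
def sortedTo (ord : LinearOrder V) (S : Finset (V × V)) (w : V) : List (V × V) :=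
  letI := ord
  (((S.filter (fun f => f.2 = w)).image Prod.fst).sort (· ≤ ·)).map fun u => (u, w)

/-- The edge `e` belongs to the tree `a`. -/
def inTree [Fintype V] {E : V → V → Prop} (a : SpTree E) (e : V × V) : Prop :=
  e.1 ≠ a.root ∧ a.out e.1 = e.2

/-- One iteration of the exploration algorithm: pick the first edge `e` of the list,
with source `w`; if `e` belongs to the tree then add `w` to `A`, delete all edges with
source `w` from the list, and append the edges of `F` with target `w` by increasing
source; otherwise erase `w`, deleting all edges with source or target `w` from the
list and from `F`. -/
def expStep [Fintype V] {E : V → V → Prop} (ord : LinearOrder V) (a : SpTree E)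
    (s : ExpState V) : ExpState V :=
  match s.Lq with
  | [] => s
  | e :: rest =>
    if inTree a e then
      { A := insert e.1 s.A
        Lq := rest.filter (fun f => decide (f.1 ≠ e.1)) ++ sortedTo ord s.F e.1
        F := s.F
        Er := s.Er }
    else
      { A := s.A
        Lq := rest.filter (fun f => decide (f.1 ≠ e.1 ∧ f.2 ≠ e.1))
        F := s.F.filter (fun f => f.1 ≠ e.1 ∧ f.2 ≠ e.1)
        Er := insert e.1 s.Er }

/-- The initial state of the exploration algorithm run on a tree rooted at `v`:
`A = {v}`, the list consists of the edges with target `v` by increasing source, and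
`F` is the set of edges with source `≠ v`. -/
def expInit [Fintype V] {E : V → V → Prop} (ord : LinearOrder V) (a : SpTree E) :
    ExpState V :=
  letI := ord
  { A := {a.root}
    Lq := ((univ.filter (fun u => E u a.root)).sort (· ≤ ·)).map fun u => (u, a.root)
    F := univ.filter fun f : V × V => E f.1 f.2 ∧ f.1 ≠ a.root
    Er := (∅ : Finset V) }

/-- The final state of the exploration algorithm (the number of iterations below is
large enough for the list to be exhausted, after which the state no longer moves). -/
def expRun [Fintype V] {E : V → V → Prop} (ord : LinearOrder V) (a : SpTree E) :
    ExpState V :=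
  (expStep ord a)^[2 * Fintype.card (V × V) + 1] (expInit ord a)

/-- The set `φ(𝐚)` of explored vertices. -/
def expPhi [Fintype V] {E : V → V → Prop} (ord : LinearOrder V) (a : SpTree E) : Finset V :=
  (expRun ord a).A

/-- The set of erased vertices. -/
def expEr [Fintype V] {E : V → V → Prop} (ord : LinearOrder V) (a : SpTree E) : Finset V :=
  (expRun ord a).Er

/-- The set `ψ(𝐚)`: the strongly connected component of the root in the subgraph
induced on `φ(𝐚)`. -/
def expPsi [Fintype V] {E : V → V → Prop} (ord : LinearOrder V) (a : SpTree E) : Finset V :=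
  univ.filter fun u => u ∈ expPhi ord a ∧
    Relation.ReflTransGen
      (fun p q => E p q ∧ p ∈ expPhi ord a ∧ q ∈ expPhi ord a) a.root u ∧
    Relation.ReflTransGen
      (fun p q => E p q ∧ p ∈ expPhi ord a ∧ q ∈ expPhi ord a) u a.root

/-- The multiplicity `m(W, w)`: the number of oriented spanning trees `𝐚` rooted at
`w` with `ψ(𝐚) = W`. -/
def multCount [Fintype V] (E : V → V → Prop) (ord : LinearOrder V) (W : Finset V)
    (w : V) : ℕ :=
  Nat.card {a : SpTree E // a.root = w ∧ expPsi ord a = W}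

/-- The multiplicity `m(W)` (the common value of the `m(W, w)`, `w ∈ W`). -/
def multW [Fintype V] (E : V → V → Prop) (ord : LinearOrder V) (W : Finset V) : ℕ :=
  letI := ord
  if h : W.Nonempty then multCount E ord W (W.min' h) else 0

end
/-- A simple directed cycle in the digraph `E'`, encoded as the (nonempty, duplicate
free) list of its vertices in cyclic order: every vertex is followed by the next one
along an edge, cyclically. -/
def IsSimpleCycle {V' : Type*} (E' : V' → V' → Prop) (c : List V') : Prop :=
  c ≠ [] ∧ c.Nodup ∧ ∀ p ∈ c.zip (c.rotate 1), E' p.1 p.2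
/-! Auxiliary development for statement3. -/

noncomputable section Statement3Aux

open Classical List Function Finset

namespace Stmt3Aux

variable {V : Type} [Fintype V] {E : V → V → Prop}

private lemma gE {α : Type*} (l : List α) {i j : ℕ} (h : i = j) (hi : i < l.length) :
    l[i] = l[j]'(h ▸ hi) := by subst h; rfl

lemma mem_zip_rot {α : Type*} {l : List α} {p : α × α} :
    p ∈ l.zip (l.rotate 1) ↔
      ∃ (j : ℕ) (hj : j < l.length),
        p = (l[j]'hj, l[(j + 1) % l.length]'(Nat.mod_lt _ (by omega))) := by
  constructor
  · intro hp
    rw [List.mem_iff_getElem] at hp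
    obtain ⟨j, hj, he⟩ := hp
    have hlen : (l.zip (l.rotate 1)).length = l.length := by
      rw [List.length_zip, List.length_rotate, Nat.min_self]
    rw [hlen] at hj
    refine ⟨j, hj, ?_⟩
    rw [← he, List.getElem_zip, List.getElem_rotate]
  · rintro ⟨j, hj, rfl⟩
    rw [List.mem_iff_getElem]
    refine ⟨j, by rw [List.length_zip, List.length_rotate, Nat.min_self]; exact hj, ?_⟩
    rw [List.getElem_zip, List.getElem_rotate]

private lemma mod_shift_ne {k j s : ℕ} (hj : j < k) (hs1 : 1 ≤ s) (hs2 : s < k) :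
    (j + s) % k ≠ j := by
  intro h
  have h1 : j % k = (j + s) % k := by rw [h, Nat.mod_eq_of_lt hj]
  have h2 : k ∣ s := by
    have := (Nat.modEq_iff_dvd' (Nat.le_add_right j s)).1 h1
    rwa [Nat.add_sub_cancel_left] at this
  have := Nat.eq_zero_of_dvd_of_lt h2 hs2
  omega

/-! ### Basic lemmas about simple cycles -/

lemma sc_pos {cy : List V} (hc : IsSimpleCycle E cy) : 0 < cy.length :=
  List.length_pos_iff.2 hc.1

lemma sc_edge {cy : List V} (hc : IsSimpleCycle E cy) {j : ℕ} (hj : j < cy.length) :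
    E (cy[j]'hj) (cy[(j + 1) % cy.length]'(Nat.mod_lt _ (by omega))) :=
  hc.2.2 _ (mem_zip_rot.2 ⟨j, hj, rfl⟩)

lemma rotate_simple {cy : List V} (hc : IsSimpleCycle E cy) (m : ℕ) :
    IsSimpleCycle E (cy.rotate m) := by
  have hk : 0 < cy.length := sc_pos hc
  refine ⟨fun h => hc.1 (by simpa using congrArg List.length h), List.nodup_rotate.2 hc.2.1, ?_⟩
  intro p hp
  rw [mem_zip_rot] at hp
  obtain ⟨j, hj, rfl⟩ := hp
  rw [List.length_rotate] at hj
  simp only [List.getElem_rotate, List.length_rotate]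
  have hidx : ((j + 1) % cy.length + m) % cy.length = ((j + m) % cy.length + 1) % cy.length := by
    rw [Nat.mod_add_mod, Nat.mod_add_mod, show j + 1 + m = j + m + 1 by omega]
  rw [gE cy hidx]
  exact sc_edge hc (Nat.mod_lt _ (by omega))

/-! ### Distance to the root in a spanning tree, and tree paths -/

def tdist (a : SpTree E) (v : V) : ℕ := Nat.find (a.reach v)

lemma tdist_spec (a : SpTree E) (v : V) : a.out^[tdist a v] v = a.root :=
  Nat.find_spec (a.reach v)

lemma tdist_root (a : SpTree E) : tdist a a.root = 0 :=
  Nat.le_zero.1 (Nat.find_le (by simp))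

lemma tdist_pos {a : SpTree E} {v : V} (h : v ≠ a.root) : 0 < tdist a v :=
  Nat.pos_of_ne_zero fun h0 => h (by simpa [h0] using tdist_spec a v)

lemma tdist_out {a : SpTree E} {v : V} (h : v ≠ a.root) :
    tdist a (a.out v) + 1 = tdist a v := by
  have hpos := tdist_pos h
  have h1 : tdist a (a.out v) ≤ tdist a v - 1 := by
    apply Nat.find_le
    have hs := tdist_spec a v
    rw [← Nat.sub_add_cancel hpos, Function.iterate_succ_apply] at hs
    exact hs
  have h2 : tdist a v ≤ tdist a (a.out v) + 1 := by
    apply Nat.find_le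
    rw [Function.iterate_succ_apply]
    exact tdist_spec a (a.out v)
  omega

lemma tdist_iterate (a : SpTree E) (v : V) :
    ∀ j, j ≤ tdist a v → tdist a (a.out^[j] v) = tdist a v - j := by
  intro j
  induction j with
  | zero => simp
  | succ n ih =>
    intro hn
    have h1 := ih (by omega)
    have hne : a.out^[n] v ≠ a.root := by
      intro h
      rw [h, tdist_root] at h1
      omega
    have h2 := tdist_out hne
    rw [Function.iterate_succ_apply']
    omega

def pathL (a : SpTree E) (v : V) : List V :=
  (List.range (tdist a v + 1)).map fun j => a.out^[j] v

@[simp] lemma pathL_length (a : SpTree E) (v : V) :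
    (pathL a v).length = tdist a v + 1 := by simp [pathL]

lemma pathL_getElem (a : SpTree E) (v : V) {j : ℕ} (hj : j < (pathL a v).length) :
    (pathL a v)[j]'hj = a.out^[j] v := by
  simp only [pathL, List.getElem_map, List.getElem_range]

lemma pathL_nodup (a : SpTree E) (v : V) : (pathL a v).Nodup := by
  apply List.Nodup.map_on ?_ List.nodup_range
  intro i hi j hj hij
  rw [List.mem_range] at hi hj
  have h1 := tdist_iterate a v i (by omega)
  have h2 := tdist_iterate a v j (by omega)
  rw [hij] at h1
  omega

lemma pathL_zero (a : SpTree E) (v : V) :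
    (pathL a v)[0]'(by simp) = v := by
  rw [pathL_getElem]; simp

lemma pathL_last (a : SpTree E) (v : V) :
    (pathL a v)[tdist a v]'(by simp) = a.root := by
  rw [pathL_getElem]; exact tdist_spec a v

lemma pathL_simple (a : SpTree E) (v : V) (h : E a.root v) :
    IsSimpleCycle E (pathL a v) := by
  refine ⟨by simp [pathL], pathL_nodup a v, ?_⟩
  intro p hp
  rw [mem_zip_rot] at hp
  obtain ⟨j, hj, rfl⟩ := hp
  have hL : (pathL a v).length = tdist a v + 1 := pathL_length a v
  simp only [pathL_getElem, pathL_length]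
  by_cases hjD : j = tdist a v
  · subst hjD
    rw [Nat.mod_self]
    simpa [tdist_spec] using h
  · have hj' : j < tdist a v := by omega
    rw [Nat.mod_eq_of_lt (by omega), Function.iterate_succ_apply']
    apply a.edge_mem
    intro hroot
    have := tdist_iterate a v j (by omega)
    rw [hroot, tdist_root] at this
    omega

/-! ### The cyclic-successor function of a cycle list -/

def cnext (cy : List V) (v : V) : V := (cy.rotate 1).getD (cy.idxOf v) v

lemma cnext_getElem {cy : List V} (hnd : cy.Nodup) {j : ℕ} (hj : j < cy.length) :
    cnext cy (cy[j]'hj) = cy[(j + 1) % cy.length]'(Nat.mod_lt _ (by omega)) := by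
  unfold cnext
  rw [hnd.idxOf_getElem j hj,
    List.getD_eq_getElem _ _ (by rw [List.length_rotate]; exact hj), List.getElem_rotate]

/-! ### Transfer of reachability between functions agreeing outside a set -/

lemma reach_transfer {g h : V → V} {W : Finset V} (hagree : ∀ v, v ∉ W → h v = g v) :
    ∀ n (v : V), g^[n] v ∈ W → ∃ m, h^[m] v ∈ W := by
  intro n
  induction n using Nat.strong_induction_on with
  | _ n ih =>
    intro v hn
    by_cases hv : v ∈ W
    · exact ⟨0, hv⟩
    · cases n with
      | zero => exact absurd hn hv
      | succ m =>
        obtain ⟨t, ht⟩ := ih m (Nat.lt_succ_self m) (g v)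
          (by rwa [← Function.iterate_succ_apply])
        exact ⟨t + 1, by rwa [Function.iterate_succ_apply, hagree v hv]⟩

/-! ### The forest obtained from a tree by cutting along a cycle -/

def forestOf (cy : List V) (a : SpTree E) (h : a.root ∈ cy) : SpForest E cy.toFinset where
  out v := if v ∈ cy then v else a.out v
  out_root v hv := if_pos (List.mem_toFinset.1 hv)
  edge_mem v hv := by
    have hv' : v ∉ cy := fun hc => hv (List.mem_toFinset.2 hc)
    show E v (if v ∈ cy then v else a.out v)
    rw [if_neg hv']
    exact a.edge_mem v fun h' => hv' (h' ▸ h)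
  reach v := by
    have hagree : ∀ w, w ∉ cy.toFinset →
        (fun u => if u ∈ cy then u else a.out u) w = a.out w := by
      intro w hw
      exact if_neg fun hwc => hw (List.mem_toFinset.2 hwc)
    obtain ⟨n, hn⟩ := a.reach v
    exact reach_transfer hagree n v (by rw [hn]; exact List.mem_toFinset.2 h)

lemma forestOf_out (cy : List V) (a : SpTree E) (h : a.root ∈ cy) (v : V) :
    (forestOf cy a h).out v = if v ∈ cy then v else a.out v := rfl

/-! ### The tree attached to a cycle, a forest, and a root on the cycle -/

def outT (cy : List V) (fo : V → V) (r : V) : V → V :=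
  fun v => if v = r then v else if v ∈ cy then cnext cy v else fo v

private lemma add_mod_cancel' {k j ir : ℕ} (hj : j < k) (hir : ir < k) :
    (j + (ir + k - j) % k) % k = ir := by
  rw [Nat.add_mod_mod, show j + (ir + k - j) = ir + k by omega, Nat.add_mod_right,
    Nat.mod_eq_of_lt hir]

lemma outT_walk {cy : List V} (hc : IsSimpleCycle E cy) (fo : V → V) {ir : ℕ}
    (hir : ir < cy.length) :
    ∀ s j (hj : j < cy.length), (j + s) % cy.length = ir →
      (outT cy fo (cy[ir]'hir))^[s] (cy[j]'hj) = cy[ir]'hir := by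
  intro s
  induction s with
  | zero =>
    intro j hj hjs
    rw [Nat.add_zero, Nat.mod_eq_of_lt hj] at hjs
    subst hjs
    rfl
  | succ s ih =>
    intro j hj hjs
    by_cases hjr : j = ir
    · subst hjr
      have hfix : outT cy fo (cy[j]'hj) (cy[j]'hj) = cy[j]'hj := if_pos rfl
      exact Function.iterate_fixed hfix _
    · have hne : cy[j]'hj ≠ cy[ir]'hir := fun h => hjr (hc.2.1.getElem_inj_iff.1 h)
      have hstep : outT cy fo (cy[ir]'hir) (cy[j]'hj)
          = cy[(j + 1) % cy.length]'(Nat.mod_lt _ (by omega)) := by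
        unfold outT
        rw [if_neg hne, if_pos (List.getElem_mem hj), cnext_getElem hc.2.1 hj]
      rw [Function.iterate_succ_apply, hstep]
      exact ih _ (Nat.mod_lt _ (by omega))
        (by rw [Nat.mod_add_mod, show j + 1 + s = j + (s + 1) by omega]; exact hjs)

def Tmk {cy : List V} (hc : IsSimpleCycle E cy) (f : SpForest E cy.toFinset) (r : V)
    (hr : r ∈ cy) : SpTree E where
  root := r
  out := outT cy f.out r
  out_root := if_pos rfl
  edge_mem v hv := by
    unfold outT
    rw [if_neg hv]
    by_cases hvc : v ∈ cy
    · rw [if_pos hvc]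
      obtain ⟨j, hj, rfl⟩ := List.mem_iff_getElem.1 hvc
      rw [cnext_getElem hc.2.1 hj]
      exact sc_edge hc hj
    · rw [if_neg hvc]
      exact f.edge_mem v fun hw => hvc (List.mem_toFinset.1 hw)
  reach v := by
    obtain ⟨ir, hir, hreq⟩ := List.mem_iff_getElem.1 hr
    subst hreq
    have hagree : ∀ w, w ∉ cy.toFinset → outT cy f.out (cy[ir]'hir) w = f.out w := by
      intro w hw
      have hw' : w ∉ cy := fun hwc => hw (List.mem_toFinset.2 hwc)
      unfold outT
      rw [if_neg (fun h => hw' (by rw [h]; exact List.getElem_mem hir)), if_neg hw']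
    obtain ⟨n0, hn0⟩ := f.reach v
    obtain ⟨n, hn⟩ := reach_transfer hagree n0 v hn0
    obtain ⟨j, hj, hw⟩ := List.mem_iff_getElem.1 (List.mem_toFinset.1 hn)
    refine ⟨(ir + cy.length - j) % cy.length + n, ?_⟩
    rw [Function.iterate_add_apply, ← hw]
    exact outT_walk hc f.out hir _ j hj (add_mod_cancel' hj hir)

@[simp] lemma Tmk_root {cy : List V} (hc : IsSimpleCycle E cy) (f : SpForest E cy.toFinset)
    (r : V) (hr : r ∈ cy) : (Tmk hc f r hr).root = r := rfl

lemma Tmk_out {cy : List V} (hc : IsSimpleCycle E cy) (f : SpForest E cy.toFinset)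
    (r : V) (hr : r ∈ cy) : (Tmk hc f r hr).out = outT cy f.out r := rfl

lemma tstep_Tmk (hs : ∀ v, ¬ E v v) {cy : List V} (hc : IsSimpleCycle E cy)
    (f : SpForest E cy.toFinset) {j : ℕ} (hj : j < cy.length) :
    TStep E (Tmk hc f (cy[j]'hj) (List.getElem_mem hj))
      (Tmk hc f (cy[(j + 1) % cy.length]'(Nat.mod_lt _ (by omega)))
        (List.getElem_mem _)) := by
  have hE := sc_edge hc hj
  have hne : (cy[j]'hj) ≠ cy[(j + 1) % cy.length]'(Nat.mod_lt _ (by omega)) := by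
    intro h
    exact hs _ (by rw [← h] at hE; exact hE)
  refine ⟨hE, hne, ?_, ?_⟩
  · show outT cy f.out (cy[(j + 1) % cy.length]'(Nat.mod_lt _ (by omega))) (cy[j]'hj)
        = cy[(j + 1) % cy.length]'(Nat.mod_lt _ (by omega))
    unfold outT
    rw [if_neg hne, if_pos (List.getElem_mem hj), cnext_getElem hc.2.1 hj]
  · intro v hv1 hv2
    simp only [Tmk_root] at hv1 hv2
    show outT cy f.out (cy[(j + 1) % cy.length]'(Nat.mod_lt _ (by omega))) v
        = outT cy f.out (cy[j]'hj) v
    unfold outT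
    rw [if_neg hv2, if_neg hv1]

/-! ### The lifted cycle in the tree graph -/

lemma Tmk_congr {cy : List V} (hc : IsSimpleCycle E cy) {f1 f2 : SpForest E cy.toFinset}
    {r1 r2 : V} (h1 : r1 ∈ cy) (h2 : r2 ∈ cy) (hr : r1 = r2) (hf : f1.out = f2.out) :
    Tmk hc f1 r1 h1 = Tmk hc f2 r2 h2 := by
  subst hr
  exact SpTree.ext' rfl (by rw [Tmk_out, Tmk_out, hf])

def cyc {cy : List V} (hc : IsSimpleCycle E cy) (f : SpForest E cy.toFinset) (m : ℕ) :
    List (SpTree E) :=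
  (cy.rotate m).attach.map fun w => Tmk hc f w.1 (List.mem_rotate.1 w.2)

@[simp] lemma cyc_length {cy : List V} (hc : IsSimpleCycle E cy) (f : SpForest E cy.toFinset)
    (m : ℕ) : (cyc hc f m).length = cy.length := by
  simp [cyc]

lemma cyc_getElem {cy : List V} (hc : IsSimpleCycle E cy) (f : SpForest E cy.toFinset)
    (m : ℕ) {j : ℕ} (hj : j < (cyc hc f m).length) :
    (cyc hc f m)[j]'hj
      = Tmk hc f (cy[(j + m) % cy.length]'(Nat.mod_lt _ (by
            rw [cyc_length] at hj; omega)))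
          (List.getElem_mem _) := by
  simp only [cyc, List.getElem_map, List.getElem_attach]
  have h2 : (cy.rotate m)[j]'(by have := hj; rw [cyc_length] at this; simpa using this)
      = cy[(j + m) % cy.length]'(Nat.mod_lt _ (by rw [cyc_length] at hj; omega)) :=
    List.getElem_rotate cy m j _
  exact Tmk_congr hc _ _ h2 rfl

lemma cyc_map_root {cy : List V} (hc : IsSimpleCycle E cy) (f : SpForest E cy.toFinset)
    (m : ℕ) : (cyc hc f m).map SpTree.root = cy.rotate m := by
  apply List.ext_getElem (by simp)
  intro j h1 h2
  rw [List.getElem_map, cyc_getElem hc f m (by simpa using h2), Tmk_root,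
    List.getElem_rotate]

lemma cyc_simple (hs : ∀ v, ¬ E v v) {cy : List V} (hc : IsSimpleCycle E cy)
    (f : SpForest E cy.toFinset) (m : ℕ) : IsSimpleCycle (TStep E) (cyc hc f m) := by
  have hk := sc_pos hc
  refine ⟨?_, ?_, ?_⟩
  · apply List.ne_nil_of_length_pos
    rw [cyc_length]
    exact hk
  · have h1 : ((cyc hc f m).map SpTree.root).Nodup := by
      rw [cyc_map_root]
      exact List.nodup_rotate.2 hc.2.1
    exact h1.of_map
  · intro p hp
    obtain ⟨j, hj, rfl⟩ := mem_zip_rot.1 hp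
    have hcl : 0 < (cyc hc f m).length := by rw [cyc_length]; exact hk
    dsimp only
    rw [cyc_getElem hc f m hj, cyc_getElem hc f m (Nat.mod_lt _ hcl)]
    have hidx : ((j + 1) % (cyc hc f m).length + m) % cy.length
        = ((j + m) % cy.length + 1) % cy.length := by
      rw [cyc_length, Nat.mod_add_mod, Nat.mod_add_mod]
      exact congrArg (· % cy.length) (by omega)
    convert tstep_Tmk hs hc f (Nat.mod_lt _ hk) using 2
    exact gE cy hidx _

/-! ### Structure of simple cycles in the tree graph -/

lemma tstep_chain {d : List (SpTree E)} (hd : IsSimpleCycle (TStep E) d) {j : ℕ}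
    (hj : j < d.length) :
    TStep E (d[j]'hj) (d[(j + 1) % d.length]'(Nat.mod_lt _ (by omega))) :=
  hd.2.2 _ (mem_zip_rot.2 ⟨j, hj, rfl⟩)

lemma roots_ne {d : List (SpTree E)} (hnd : (d.map SpTree.root).Nodup) {i j : ℕ}
    (hi : i < d.length) (hj : j < d.length) (hij : i ≠ j) :
    (d[i]'hi).root ≠ (d[j]'hj).root := by
  intro h
  apply hij
  have h2 : (d.map SpTree.root)[i]'(by simpa using hi)
      = (d.map SpTree.root)[j]'(by simpa using hj) := by
    rw [List.getElem_map, List.getElem_map]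
    exact h
  exact hnd.getElem_inj_iff.1 h2

lemma out_root_chain {d : List (SpTree E)} (hd : IsSimpleCycle (TStep E) d)
    (hnd : (d.map SpTree.root).Nodup) {i j : ℕ} (hi : i < d.length) (hj : j < d.length)
    (hij : i ≠ j) :
    (d[i]'hi).out ((d[j]'hj).root)
      = (d[(j + 1) % d.length]'(Nat.mod_lt _ (by omega))).root := by
  have hk : 0 < d.length := by omega
  have key : ∀ t, t + 1 < d.length → ∀ (h : (j + 1 + t) % d.length < d.length),
      (d[(j + 1 + t) % d.length]'h).out ((d[j]'hj).root)
        = (d[(j + 1) % d.length]'(Nat.mod_lt _ hk)).root := by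
    intro t
    induction t with
    | zero =>
      intro _ h
      have h1 := (tstep_chain hd hj).2.2.1
      rw [gE d (show (j + 1 + 0) % d.length = (j + 1) % d.length by rw [Nat.add_zero])]
      exact h1
    | succ t ih =>
      intro ht h
      have hl : (j + 1 + t) % d.length < d.length := Nat.mod_lt _ hk
      have hlj : (j + 1 + t) % d.length ≠ j := by
        have h2 := mod_shift_ne hj (s := 1 + t) (by omega) (by omega)
        rwa [show j + (1 + t) = j + 1 + t by omega] at h2
      have hlj2 : ((j + 1 + t) % d.length + 1) % d.length ≠ j := by
        have h2 := mod_shift_ne hj (s := t + 2) (by omega) (by omega)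
        rwa [show j + (t + 2) = j + 1 + t + 1 by omega, ← Nat.mod_add_mod] at h2
      have hstep := (tstep_chain hd hl).2.2.2 ((d[j]'hj).root)
        (roots_ne hnd hj hl (Ne.symm hlj)) (roots_ne hnd hj (Nat.mod_lt _ hk) (Ne.symm hlj2))
      rw [gE d (show (j + 1 + (t + 1)) % d.length
          = ((j + 1 + t) % d.length + 1) % d.length from by
        rw [Nat.mod_add_mod]
        exact congrArg (· % d.length) (by omega))]
      rw [hstep]
      exact ih (by omega) hl
  have hco : (j + 1 + (i + d.length - (j + 1) % d.length) % d.length) % d.length = i := by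
    rw [← Nat.mod_add_mod, Nat.add_mod_mod,
      show (j + 1) % d.length + (i + d.length - (j + 1) % d.length) = i + d.length from by
        have h2 := Nat.mod_lt (j + 1) hk
        omega,
      Nat.add_mod_right, Nat.mod_eq_of_lt hi]
  have hult : (i + d.length - (j + 1) % d.length) % d.length < d.length := Nat.mod_lt _ hk
  have hne : (i + d.length - (j + 1) % d.length) % d.length ≠ d.length - 1 := by
    intro h
    apply hij
    rw [h, show j + 1 + (d.length - 1) = j + d.length from by omega,
      Nat.add_mod_right, Nat.mod_eq_of_lt hj] at hco
    exact hco.symm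
  have h1 := key ((i + d.length - (j + 1) % d.length) % d.length) (by omega)
    (by rw [hco]; exact hi)
  rw [gE d hco] at h1
  exact h1

lemma out_nonroot_chain {d : List (SpTree E)} (hd : IsSimpleCycle (TStep E) d)
    {v : V} (hv : v ∉ d.map SpTree.root) :
    ∀ i (hi : i < d.length), (d[i]'hi).out v = (d[0]'(by omega)).out v := by
  intro i
  induction i with
  | zero => intro hi; rfl
  | succ n ih =>
    intro hi
    have hn : n < d.length := by omega
    have hv1 : v ≠ (d[n]'hn).root := fun h =>
      hv (by rw [h]; exact List.mem_map_of_mem (List.getElem_mem hn))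
    have hv2 : v ≠ (d[(n + 1) % d.length]'(Nat.mod_lt _ (by omega))).root := fun h =>
      hv (by rw [h]; exact List.mem_map_of_mem (List.getElem_mem _))
    have hstep := (tstep_chain hd hn).2.2.2 v hv1 hv2
    rw [gE d (show n + 1 = (n + 1) % d.length from (Nat.mod_eq_of_lt hi).symm), hstep]
    exact ih hn

lemma len_eq {cy : List V} {d : List (SpTree E)} {m : ℕ}
    (hm : d.map SpTree.root = cy.rotate m) : d.length = cy.length := by
  have h := congrArg List.length hm
  simpa using h

lemma root_getElem {cy : List V} {d : List (SpTree E)} {m : ℕ}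
    (hm : d.map SpTree.root = cy.rotate m) {j : ℕ} (hj : j < d.length) :
    (d[j]'hj).root
      = cy[(j + m) % cy.length]'(Nat.mod_lt _ (by have := len_eq hm; omega)) := by
  have h1 : (d.map SpTree.root)[j]'(by simpa using hj)
      = (cy.rotate m)[j]'(by rw [List.length_rotate, ← len_eq hm]; exact hj) :=
    List.getElem_of_eq hm _
  rw [List.getElem_map] at h1
  rw [h1, List.getElem_rotate]

lemma root_mem {cy : List V} {d : List (SpTree E)} {m : ℕ}
    (hm : d.map SpTree.root = cy.rotate m) {j : ℕ} (hj : j < d.length) :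
    (d[j]'hj).root ∈ cy := by
  rw [root_getElem hm hj]
  exact List.getElem_mem _

lemma roots_nodup {cy : List V} {d : List (SpTree E)} {m : ℕ} (hc : IsSimpleCycle E cy)
    (hm : d.map SpTree.root = cy.rotate m) : (d.map SpTree.root).Nodup := by
  rw [hm]
  exact List.nodup_rotate.2 hc.2.1

lemma cnext_root {cy : List V} {d : List (SpTree E)} {m : ℕ} (hc : IsSimpleCycle E cy)
    (hm : d.map SpTree.root = cy.rotate m) {j : ℕ} (hj : j < d.length) :
    cnext cy ((d[j]'hj).root)
      = (d[(j + 1) % d.length]'(Nat.mod_lt _ (by omega))).root := by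
  have hkc : 0 < cy.length := by have := len_eq hm; omega
  rw [root_getElem hm hj, cnext_getElem hc.2.1, root_getElem hm (Nat.mod_lt _ (by omega))]
  rw [gE cy (show ((j + m) % cy.length + 1) % cy.length
      = ((j + 1) % d.length + m) % cy.length from by
    rw [len_eq hm, Nat.mod_add_mod, Nat.mod_add_mod]
    exact congrArg (· % cy.length) (by omega))]

lemma master {cy : List V} (hc : IsSimpleCycle E cy) {d : List (SpTree E)}
    (hd : IsSimpleCycle (TStep E) d) {m : ℕ} (hm : d.map SpTree.root = cy.rotate m)
    (h0 : 0 < d.length) {j : ℕ} (hj : j < d.length) :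
    d[j]'hj = Tmk hc (forestOf cy (d[0]'h0) (root_mem hm h0)) ((d[j]'hj).root)
      (root_mem hm hj) := by
  have hnd := roots_nodup hc hm
  refine SpTree.ext' ?_ ?_
  · rfl
  funext v
  show (d[j]'hj).out v
      = outT cy (forestOf cy (d[0]'h0) (root_mem hm h0)).out ((d[j]'hj).root) v
  unfold outT
  by_cases h1 : v = (d[j]'hj).root
  · rw [if_pos h1, h1, (d[j]'hj).out_root]
  · rw [if_neg h1]
    by_cases h2 : v ∈ cy
    · rw [if_pos h2]
      have hv : v ∈ d.map SpTree.root := by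
        rw [hm]
        exact List.mem_rotate.2 h2
      obtain ⟨j', hj', hvj⟩ := List.mem_iff_getElem.1 hv
      have hj'' : j' < d.length := by rw [List.length_map] at hj'; exact hj'
      rw [List.getElem_map] at hvj
      subst hvj
      have hjj' : j ≠ j' := fun h => h1 (congrArg SpTree.root (gE d h hj)).symm
      rw [cnext_root hc hm hj'']
      exact out_root_chain hd hnd hj hj'' hjj'
    · rw [if_neg h2, forestOf_out, if_neg h2]
      exact out_nonroot_chain hd
        (fun hvm => h2 (by rw [hm] at hvm; exact List.mem_rotate.1 hvm)) j hj

lemma rot_eq_rot {alpha : Type _} {l : List alpha} (hnd : l.Nodup) (hne : 0 < l.length)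
    {p q : ℕ}
    (h : (l.rotate p)[0]'(by simpa using hne) = (l.rotate q)[0]'(by simpa using hne)) :
    l.rotate p = l.rotate q := by
  rw [List.getElem_rotate, List.getElem_rotate] at h
  have h2 := hnd.getElem_inj_iff.1 h
  rw [Nat.zero_add, Nat.zero_add] at h2
  rw [← List.rotate_mod l p, ← List.rotate_mod l q, h2]

/-! ### Identification of the projected cycle from an edge of the tree graph -/

lemma cycle_path {d : List (SpTree E)} (hd : IsSimpleCycle (TStep E) d)
    (hp : IsSimpleCycle E (d.map SpTree.root)) {i : ℕ} (hi : i < d.length) :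
    pathL (d[i]'hi) ((d[(i + 1) % d.length]'(Nat.mod_lt _ (by omega))).root)
      = (d.map SpTree.root).rotate (i + 1) := by
  have hk : 0 < d.length := by omega
  have hnd : (d.map SpTree.root).Nodup := hp.2.1
  have hwalk : ∀ t, t ≤ d.length - 1 →
      (d[i]'hi).out^[t] ((d[(i + 1) % d.length]'(Nat.mod_lt _ hk)).root)
        = (d[(i + 1 + t) % d.length]'(Nat.mod_lt _ hk)).root := by
    intro t
    induction t with
    | zero =>
      intro _
      rw [Function.iterate_zero_apply, gE d (show (i + 1) % d.length = (i + 1 + 0) % d.length by rw [Nat.add_zero])]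
    | succ t ih =>
      intro ht
      rw [Function.iterate_succ_apply', ih (by omega)]
      have hne : i ≠ (i + 1 + t) % d.length := by
        have h2 := mod_shift_ne hi (s := 1 + t) (by omega) (by omega)
        rw [show i + (1 + t) = i + 1 + t by omega] at h2
        exact Ne.symm h2
      rw [out_root_chain hd hnd hi (Nat.mod_lt _ hk) hne]
      rw [gE d (show ((i + 1 + t) % d.length + 1) % d.length
          = (i + 1 + (t + 1)) % d.length from by
        rw [Nat.mod_add_mod]
        exact congrArg (· % d.length) (by omega))]
  have hdist : tdist (d[i]'hi) ((d[(i + 1) % d.length]'(Nat.mod_lt _ hk)).root)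
      = d.length - 1 := by
    have hub : (d[i]'hi).out^[d.length - 1]
        ((d[(i + 1) % d.length]'(Nat.mod_lt _ hk)).root) = (d[i]'hi).root := by
      rw [hwalk (d.length - 1) le_rfl,
        gE d (show (i + 1 + (d.length - 1)) % d.length = i from by
          rw [show i + 1 + (d.length - 1) = i + d.length from by omega,
            Nat.add_mod_right, Nat.mod_eq_of_lt hi])]
    have hle : tdist (d[i]'hi) ((d[(i + 1) % d.length]'(Nat.mod_lt _ hk)).root)
        ≤ d.length - 1 := Nat.find_le hub
    have hlt : ¬ tdist (d[i]'hi) ((d[(i + 1) % d.length]'(Nat.mod_lt _ hk)).root)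
        < d.length - 1 := by
      intro hltt
      have hspec := tdist_spec (d[i]'hi) ((d[(i + 1) % d.length]'(Nat.mod_lt _ hk)).root)
      rw [hwalk _ (by omega)] at hspec
      have hnei : (i + 1 + tdist (d[i]'hi)
          ((d[(i + 1) % d.length]'(Nat.mod_lt _ hk)).root)) % d.length ≠ i := by
        have h2 := mod_shift_ne hi
          (s := 1 + tdist (d[i]'hi) ((d[(i + 1) % d.length]'(Nat.mod_lt _ hk)).root))
          (by omega) (by omega)
        rwa [show i + (1 + tdist (d[i]'hi) ((d[(i + 1) % d.length]'(Nat.mod_lt _ hk)).root))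
          = i + 1 + tdist (d[i]'hi) ((d[(i + 1) % d.length]'(Nat.mod_lt _ hk)).root)
          from by omega] at h2
      exact roots_ne hnd (Nat.mod_lt _ hk) hi hnei hspec
    omega
  apply List.ext_getElem
  · rw [pathL_length, hdist, List.length_rotate, List.length_map]
    omega
  · intro t h1 h2
    rw [pathL_getElem, hwalk t (by rw [pathL_length, hdist] at h1; omega),
      List.getElem_rotate, List.getElem_map]
    simp only [List.length_map]
    rw [gE d (show (i + 1 + t) % d.length = (t + (i + 1)) % d.length from
      congrArg (· % d.length) (by omega))]

/-! ### The two basic trees on an edge of the tree graph -/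

lemma pathL_root_mem (a : SpTree E) (v : V) : a.root ∈ pathL a v :=
  pathL_last a v ▸ List.getElem_mem (show tdist a v < (pathL a v).length by simp)

lemma pathL_v_mem (a : SpTree E) (v : V) : v ∈ pathL a v := by
  have h := List.getElem_mem (show 0 < (pathL a v).length by simp)
  rw [pathL_zero] at h
  exact h

lemma a_eq_Tmk {a b : SpTree E} (hab : TStep E a b)
    (hc0 : IsSimpleCycle E (pathL a b.root)) :
    a = Tmk hc0 (forestOf (pathL a b.root) a (pathL_root_mem a b.root)) a.root
      (pathL_root_mem a b.root) := by
  refine SpTree.ext' ?_ ?_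
  · rfl
  funext v
  show a.out v = outT (pathL a b.root)
    (forestOf (pathL a b.root) a (pathL_root_mem a b.root)).out a.root v
  unfold outT
  by_cases h1 : v = a.root
  · rw [if_pos h1, h1, a.out_root]
  · rw [if_neg h1]
    by_cases h2 : v ∈ pathL a b.root
    · rw [if_pos h2]
      obtain ⟨j, hj, rfl⟩ := List.mem_iff_getElem.1 h2
      rw [cnext_getElem (pathL_nodup a b.root) hj]
      have hL : (pathL a b.root).length = tdist a b.root + 1 := pathL_length a b.root
      have hjlt : j < tdist a b.root := by
        by_contra hge
        have hj' : j = tdist a b.root := by omega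
        exact h1 ((gE _ hj' hj).trans (pathL_last a b.root))
      rw [gE _ (show (j + 1) % (pathL a b.root).length = j + 1 from
        Nat.mod_eq_of_lt (by omega))]
      rw [pathL_getElem, pathL_getElem, Function.iterate_succ_apply']
    · rw [if_neg h2, forestOf_out, if_neg h2]

lemma b_eq_Tmk {a b : SpTree E} (hab : TStep E a b)
    (hc0 : IsSimpleCycle E (pathL a b.root)) :
    b = Tmk hc0 (forestOf (pathL a b.root) a (pathL_root_mem a b.root)) b.root
      (pathL_v_mem a b.root) := by
  refine SpTree.ext' ?_ ?_
  · rfl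
  funext v
  show b.out v = outT (pathL a b.root)
    (forestOf (pathL a b.root) a (pathL_root_mem a b.root)).out b.root v
  unfold outT
  by_cases h1 : v = b.root
  · rw [if_pos h1, h1, b.out_root]
  · rw [if_neg h1]
    by_cases h3 : v = a.root
    · subst h3
      rw [if_pos (pathL_root_mem a b.root), hab.2.2.1]
      have hmm : cnext (pathL a b.root)
          ((pathL a b.root)[tdist a b.root]'(by simp))
          = (pathL a b.root)[0]'(by simp) := by
        rw [cnext_getElem (pathL_nodup a b.root) (by simp)]
        exact gE _ (by rw [pathL_length]; exact Nat.mod_self _) _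
      rw [← pathL_last a b.root, hmm, pathL_zero]
    · rw [hab.2.2.2 v h3 h1]
      have ha := a_eq_Tmk hab hc0
      have h4 : a.out v = outT (pathL a b.root)
          (forestOf (pathL a b.root) a (pathL_root_mem a b.root)).out a.root v := by
        conv_lhs => rw [ha]
        rfl
      rw [h4]
      unfold outT
      rw [if_neg h3]

lemma mem_zip_cyc {cy : List V} (hc : IsSimpleCycle E cy) (f : SpForest E cy.toFinset)
    (m : ℕ) (hmlt : m < cy.length) {j : ℕ} (hj : j < cy.length) :
    (Tmk hc f (cy[j]'hj) (List.getElem_mem hj),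
      Tmk hc f (cy[(j + 1) % cy.length]'(Nat.mod_lt _ (by omega))) (List.getElem_mem _))
      ∈ (cyc hc f m).zip ((cyc hc f m).rotate 1) := by
  have hkc : 0 < cy.length := by omega
  have hccl : 0 < (cyc hc f m).length := by rw [cyc_length]; omega
  apply mem_zip_rot.2
  have hjlt : (j + (cy.length - m)) % cy.length < (cyc hc f m).length := by
    rw [cyc_length]
    exact Nat.mod_lt _ hkc
  refine ⟨(j + (cy.length - m)) % cy.length, hjlt, ?_⟩
  have hidx1 : ((j + (cy.length - m)) % cy.length + m) % cy.length = j := by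
    rw [Nat.mod_add_mod, show j + (cy.length - m) + m = j + cy.length by omega,
      Nat.add_mod_right, Nat.mod_eq_of_lt hj]
  have hidx2 : (((j + (cy.length - m)) % cy.length + 1) % (cyc hc f m).length + m) % cy.length
      = (j + 1) % cy.length := by
    rw [cyc_length, Nat.mod_add_mod,
      Nat.add_right_comm ((j + (cy.length - m)) % cy.length) 1 m,
      ← Nat.mod_add_mod ((j + (cy.length - m)) % cy.length + m) cy.length 1, hidx1]
  have hg1 : (cyc hc f m)[(j + (cy.length - m)) % cy.length]'hjlt
      = Tmk hc f (cy[j]'hj) (List.getElem_mem hj) := by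
    rw [cyc_getElem hc f m hjlt]
    exact Tmk_congr hc _ _ (gE cy hidx1 _) rfl
  have hg2 : (cyc hc f m)[((j + (cy.length - m)) % cy.length + 1) % (cyc hc f m).length]'(Nat.mod_lt _ hccl)
      = Tmk hc f (cy[(j + 1) % cy.length]'(Nat.mod_lt _ (by omega))) (List.getElem_mem _) := by
    rw [cyc_getElem hc f m (Nat.mod_lt _ hccl)]
    exact Tmk_congr hc _ _ (gE cy hidx2 _) rfl
  rw [hg1, hg2]

end Stmt3Aux
end Statement3Aux

/-- The edge set of the tree graph `𝒯G` can be partitioned into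
edge-disjoint simple directed cycles, each of which projects (bijectively) under `p`
onto a simple directed cycle of `G`; moreover, for every simple directed cycle `c`
of `G` with vertex set `W`, the number of simple cycles of `𝒯G` lying above `c`
(counted here as lists, each geometric cycle being represented by its
`c.length` rotations) equals the number of oriented forests of `G` rooted in `W`. -/
theorem statement3 {V : Type} [Fintype V] (E : V → V → Prop)
    (hsimple : ∀ v, ¬ E v v) (hsc : SConn E Set.univ) :
    (∃ 𝒞 : Set (List (SpTree E)),
      (∀ c ∈ 𝒞, IsSimpleCycle (TStep E) c ∧ IsSimpleCycle E (c.map SpTree.root)) ∧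
      (∀ a b : SpTree E, TStep E a b →
        ∃! c, c ∈ 𝒞 ∧ (a, b) ∈ c.zip (c.rotate 1))) ∧
    (∀ c : List V, IsSimpleCycle E c →
      Nat.card {d : List (SpTree E) //
          IsSimpleCycle (TStep E) d ∧ ∃ m, d.map SpTree.root = c.rotate m} =
        c.length * Nat.card (SpForest E c.toFinset)) := by
  classical
  open Stmt3Aux in
  constructor
  · -- Part 1: partition of the edges of the tree graph into lifted simple cycles
    letI ord : LinearOrder V := LinearOrder.lift' (Fintype.equivFin V)
      (Fintype.equivFin V).injective
    refine ⟨{d | IsSimpleCycle (TStep E) d ∧ IsSimpleCycle E (d.map SpTree.root) ∧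
        ∀ (h : 0 < (d.map SpTree.root).length) (x : V), x ∈ d.map SpTree.root →
          ((d.map SpTree.root)[0]'h) ≤ x}, fun c hc => ⟨hc.1, hc.2.1⟩, ?_⟩
    intro a b hab
    have hE0 : E a.root b.root := hab.1
    have hc0 : IsSimpleCycle E (pathL a b.root) := pathL_simple a b.root hE0
    have hk0 : 0 < (pathL a b.root).length := sc_pos hc0
    have hlen0 : (pathL a b.root).length = tdist a b.root + 1 := pathL_length a b.root
    have hWne : (pathL a b.root).toFinset.Nonempty :=
      ⟨b.root, List.mem_toFinset.2 (pathL_v_mem a b.root)⟩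
    set vmin := (pathL a b.root).toFinset.min' hWne with hvmindef
    have hvmin_mem : vmin ∈ pathL a b.root :=
      List.mem_toFinset.1 ((pathL a b.root).toFinset.min'_mem hWne)
    set m := (pathL a b.root).idxOf vmin with hmdef
    have hmlt : m < (pathL a b.root).length := List.idxOf_lt_length_iff.2 hvmin_mem
    set f := forestOf (pathL a b.root) a (pathL_root_mem a b.root) with hfdef
    have hLlen : (cyc hc0 f m).length = (pathL a b.root).length := cyc_length hc0 f m
    have hLmap : (cyc hc0 f m).map SpTree.root = (pathL a b.root).rotate m :=
      cyc_map_root hc0 f m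
    -- the two endpoints as canonical trees
    have ha' : a = Tmk hc0 f ((pathL a b.root)[tdist a b.root]'(by simp))
        (List.getElem_mem _) :=
      (a_eq_Tmk hab hc0).trans (Tmk_congr hc0 _ _ (pathL_last a b.root).symm rfl)
    have hb' : b = Tmk hc0 f
        ((pathL a b.root)[(tdist a b.root + 1) % (pathL a b.root).length]'(Nat.mod_lt _ hk0))
        (List.getElem_mem _) :=
      (b_eq_Tmk hab hc0).trans (Tmk_congr hc0 _ _ (by
        rw [gE (pathL a b.root)
          (show (tdist a b.root + 1) % (pathL a b.root).length = 0 from by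
            rw [← hlen0, Nat.mod_self]) _]
        exact (pathL_zero a b.root).symm) rfl)
    have hmemab : (a, b) ∈ (cyc hc0 f m).zip ((cyc hc0 f m).rotate 1) := by
      have hmz := mem_zip_cyc hc0 f m hmlt (show tdist a b.root < (pathL a b.root).length
        by omega)
      rw [← ha', ← hb'] at hmz
      exact hmz
    refine ⟨cyc hc0 f m, ⟨⟨cyc_simple hsimple hc0 f m, ?_, ?_⟩, hmemab⟩, ?_⟩
    · rw [hLmap]
      exact rotate_simple hc0 m
    · -- canonicity: the head of the projected cycle is the minimum
      intro h x hx
      have h1 : ((cyc hc0 f m).map SpTree.root)[0]'h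
          = (pathL a b.root)[(0 + m) % (pathL a b.root).length]'(Nat.mod_lt _ hk0) := by
        rw [List.getElem_of_eq hLmap h, List.getElem_rotate]
      have h2 : (pathL a b.root)[m]'hmlt = vmin := List.getElem_idxOf hmlt
      rw [h1, gE _ (show (0 + m) % (pathL a b.root).length = m from by
        rw [Nat.zero_add, Nat.mod_eq_of_lt hmlt]) _, h2]
      apply Finset.min'_le
      apply List.mem_toFinset.2
      rw [hLmap] at hx
      exact List.mem_rotate.1 hx
    · -- uniqueness
      intro d hd12
      obtain ⟨⟨hdc, hdp, hdcanon⟩, hdzip⟩ := hd12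
      obtain ⟨i, hi, hpair⟩ := mem_zip_rot.1 hdzip
      have h0d : 0 < d.length := by omega
      have hai : a = d[i]'hi := congrArg Prod.fst hpair
      have hbi : b = d[(i + 1) % d.length]'(Nat.mod_lt _ h0d) := congrArg Prod.snd hpair
      have hpath : pathL a b.root = (d.map SpTree.root).rotate (i + 1) := by
        rw [hai, hbi]
        exact cycle_path hdc hdp hi
      have hrotlen : 0 < (d.map SpTree.root).length := by
        rw [List.length_map]
        omega
      have hdmap : d.map SpTree.root = (pathL a b.root).rotate m := by
        have h3 : (d.map SpTree.root).rotate (i + 1 + m) = (pathL a b.root).rotate m := by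
          rw [← List.rotate_rotate, ← hpath]
        have h4 : ((d.map SpTree.root).rotate (i + 1 + m))[0]'(by simpa using hrotlen)
            = vmin := by
          have h2 : (pathL a b.root)[m]'hmlt = vmin := List.getElem_idxOf hmlt
          rw [List.getElem_of_eq h3 _, List.getElem_rotate,
            gE _ (show ((0 : ℕ) + m) % (pathL a b.root).length = m from by
              rw [Nat.zero_add, Nat.mod_eq_of_lt hmlt]) _, h2]
        have h5 : ((d.map SpTree.root).rotate 0)[0]'(by simpa using hrotlen) = vmin := by
          have h6 : ((d.map SpTree.root).rotate 0)[0]'(by simpa using hrotlen)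
              = (d.map SpTree.root)[0]'hrotlen := List.getElem_of_eq (List.rotate_zero _) _
          rw [h6]
          apply le_antisymm
          · apply hdcanon hrotlen vmin
            have h7 := hvmin_mem
            rw [hpath] at h7
            exact List.mem_rotate.1 h7
          · apply Finset.min'_le
            apply List.mem_toFinset.2
            rw [hpath]
            exact List.mem_rotate.2 (List.getElem_mem hrotlen)
        have h8 := rot_eq_rot (l := d.map SpTree.root) hdp.2.1 hrotlen
          (p := 0) (q := i + 1 + m) (h5.trans h4.symm)
        rw [List.rotate_zero] at h8
        rw [← h3, ← h8]
      apply List.ext_getElem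
      · rw [cyc_length]
        have h9 := congrArg List.length hdmap
        simpa using h9
      · intro t h1 h2
        rw [master hc0 hdc hdmap h0d h1, cyc_getElem hc0 f m h2]
        refine Tmk_congr hc0 _ _ ?_ ?_
        · exact root_getElem hdmap h1
        · funext v
          rw [hfdef, forestOf_out, forestOf_out]
          by_cases hvc : v ∈ pathL a b.root
          · rw [if_pos hvc, if_pos hvc]
          · rw [if_neg hvc, if_neg hvc]
            have hnr : v ∉ d.map SpTree.root := fun hvm => hvc (by
              rw [hdmap] at hvm
              exact List.mem_rotate.1 hvm)
            rw [hai]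
            exact (out_nonroot_chain hdc hnr i hi).symm
  · -- Part 2: counting the simple cycles above a given simple cycle
    intro cy hcc
    have hk : 0 < cy.length := sc_pos hcc
    have hcard : Nat.card {d : List (SpTree E) // IsSimpleCycle (TStep E) d ∧
          ∃ m, d.map SpTree.root = cy.rotate m}
        = Nat.card (Fin cy.length × SpForest E cy.toFinset) := by
      apply Nat.card_congr
      apply Equiv.symm
      refine Equiv.ofBijective (fun p : Fin cy.length × SpForest E cy.toFinset =>
        ⟨cyc hcc p.2 p.1, cyc_simple hsimple hcc p.2 p.1, p.1, cyc_map_root hcc p.2 p.1⟩)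
        ⟨?_, ?_⟩
      · rintro ⟨i, f⟩ ⟨i', f'⟩ hpq
        rw [Subtype.mk.injEq] at hpq
        have hmap := congrArg (List.map SpTree.root) hpq
        rw [cyc_map_root, cyc_map_root] at hmap
        have hieq : (i : ℕ) = (i' : ℕ) := by
          have h0 := List.getElem_of_eq hmap (show (0:ℕ) < (cy.rotate (i:ℕ)).length by
            simpa using hk)
          rw [List.getElem_rotate, List.getElem_rotate] at h0
          have h1 := hcc.2.1.getElem_inj_iff.1 h0
          rwa [Nat.zero_add, Nat.zero_add, Nat.mod_eq_of_lt i.2, Nat.mod_eq_of_lt i'.2] at h1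
        have hfeq : f = f' := by
          apply SpForest.ext'
          funext v
          by_cases hvc : v ∈ cy
          · rw [f.out_root v (List.mem_toFinset.2 hvc), f'.out_root v (List.mem_toFinset.2 hvc)]
          · have h0 := List.getElem_of_eq hpq (show (0:ℕ) < (cyc hcc f (i:ℕ)).length by
              rw [cyc_length]; exact hk)
            rw [cyc_getElem hcc f (i:ℕ) (by rw [cyc_length]; exact hk),
              cyc_getElem hcc f' (i':ℕ) (by rw [cyc_length]; exact hk)] at h0
            have hout := congrFun (congrArg SpTree.out h0) v
            rw [Tmk_out, Tmk_out] at hout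
            unfold outT at hout
            have hvr1 : v ≠ cy[(0 + (i:ℕ)) % cy.length]'(Nat.mod_lt _ hk) := fun hh =>
              hvc (by rw [hh]; exact List.getElem_mem _)
            have hvr2 : v ≠ cy[(0 + (i':ℕ)) % cy.length]'(Nat.mod_lt _ hk) := fun hh =>
              hvc (by rw [hh]; exact List.getElem_mem _)
            rw [if_neg hvr1, if_neg hvr2, if_neg hvc, if_neg hvc] at hout
            exact hout
        simp only [Prod.mk.injEq]
        exact ⟨Fin.ext hieq, hfeq⟩
      · rintro ⟨d, hd, m, hm⟩
        have h0 : 0 < d.length := List.length_pos_iff.2 hd.1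
        refine ⟨(⟨m % cy.length, Nat.mod_lt _ hk⟩,
          forestOf cy (d[0]'h0) (root_mem hm h0)), ?_⟩
        apply Subtype.ext
        show cyc hcc (forestOf cy (d[0]'h0) (root_mem hm h0)) (m % cy.length) = d
        apply List.ext_getElem
        · rw [cyc_length]
          exact (len_eq hm).symm
        · intro t h1 h2
          rw [cyc_getElem hcc _ _ h1, master hcc hd hm h0 h2]
          refine Tmk_congr hcc _ _ ?_ rfl
          rw [root_getElem hm h2]
          exact gE cy (by rw [Nat.add_mod_mod]) _
    rw [hcard, Nat.card_prod]
    congr 1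
    simp [Nat.card_eq_fintype_card]
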